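/- The minimum size of a locally nonforesty graph of order 5 is 9. -/

import Mathlib

open SimpleGraph

def LocallyNonforesty {V : Type*} (G : SimpleGraph V) : Prop :=
  ∀ v : V, ¬ (G.induce (G.neighborSet v)).IsAcyclic

def ThreeConnected {V : Type*} [Fintype V] (G : SimpleGraph V) : Prop :=
  4 ≤ Fintype.card V ∧ ∀ S : Finset V, S.card ≤ 2 → (G.induce ((↑S : Set V)ᶜ)).Connected

/-! ### Auxiliary material -/

/-- `K₅` minus one edge (the edge `{3,4}`). -/
private def G5 : SimpleGraph (Fin 5) where
  Adj x y := x ≠ y ∧ ¬(x = 3 ∧ y = 4) ∧ ¬(x = 4 ∧ y = 3)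
  symm := by constructor; intro x y h; revert h; revert x y; decide
  loopless := by constructor; intro x h; revert h; revert x; decide

private instance : DecidableRel G5.Adj := fun x y =>
  inferInstanceAs (Decidable (x ≠ y ∧ ¬(x = 3 ∧ y = 4) ∧ ¬(x = 4 ∧ y = 3)))

private lemma triangle_not_acyclic {α : Type*} {H : SimpleGraph α} {x y z : α}
    (hxy : H.Adj x y) (hyz : H.Adj y z) (hzx : H.Adj z x) : ¬ H.IsAcyclic := by
  intro h
  exact h (Walk.cons hxy (Walk.cons hyz (Walk.cons hzx Walk.nil)))
    (by simp [Walk.isCycle_def, Walk.isTrail_def, Sym2.eq_iff,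
      hxy.ne, hyz.ne, hzx.ne, hxy.ne', hyz.ne', hzx.ne'])

private lemma nbhd_triangle {V : Type*} (G : SimpleGraph V) (v a b c : V)
    (hva : G.Adj v a) (hvb : G.Adj v b) (hvc : G.Adj v c)
    (hab : G.Adj a b) (hbc : G.Adj b c) (hca : G.Adj c a) :
    ¬ (G.induce (G.neighborSet v)).IsAcyclic :=
  triangle_not_acyclic (x := ⟨a, hva⟩) (y := ⟨b, hvb⟩) (z := ⟨c, hvc⟩)
    (by simpa using hab) (by simpa using hbc) (by simpa using hca)

private lemma G5_locally : LocallyNonforesty G5 := by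
  intro v
  fin_cases v
  · exact nbhd_triangle G5 0 1 2 3 (by decide) (by decide) (by decide) (by decide)
      (by decide) (by decide)
  · exact nbhd_triangle G5 1 0 2 3 (by decide) (by decide) (by decide) (by decide)
      (by decide) (by decide)
  · exact nbhd_triangle G5 2 0 1 3 (by decide) (by decide) (by decide) (by decide)
      (by decide) (by decide)
  · exact nbhd_triangle G5 3 0 1 2 (by decide) (by decide) (by decide) (by decide)
      (by decide) (by decide)
  · exact nbhd_triangle G5 4 0 1 2 (by decide) (by decide) (by decide) (by decide)
      (by decide) (by decide)

private lemma G5_card : G5.edgeSet.ncard = 9 := by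
  have hsum : ∑ v, G5.degree v = 18 := by decide
  have h2 := G5.sum_degrees_eq_twice_card_edges
  rw [← SimpleGraph.coe_edgeFinset, Set.ncard_coe_finset]
  omega

private lemma degree_ge_three (G : SimpleGraph (Fin 5)) [DecidableRel G.Adj]
    (h : LocallyNonforesty G) (v : Fin 5) : 3 ≤ G.degree v := by
  have hex : ∃ (x : ↥(G.neighborSet v)) (c : (G.induce (G.neighborSet v)).Walk x x),
      c.IsCycle := by
    by_contra hno
    push_neg at hno
    exact h v fun x c hc => hno x c hc
  obtain ⟨x, c, hc⟩ := hex
  have h3 : 3 ≤ c.length := hc.three_le_length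
  have hle := hc.support_nodup.length_le_card
  rw [G.card_neighborSet_eq_degree v] at hle
  have hst : c.support.length = c.length + 1 := c.length_support
  have : c.support.tail.length = c.support.length - 1 := by cases c.support <;> simp
  omega

private lemma complete_of_cycle_card_three {α : Type*} [Fintype α] [DecidableEq α]
    {H : SimpleGraph α} (hcard : Fintype.card α = 3) (h : ¬ H.IsAcyclic) :
    ∀ p q : α, p ≠ q → H.Adj p q := by
  have hex : ∃ (x : α) (c : H.Walk x x), c.IsCycle := by
    by_contra hno
    push_neg at hno
    exact h fun v c hc => hno v c hc
  obtain ⟨x, c, hc⟩ := hex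
  have h3 : 3 ≤ c.length := hc.three_le_length
  have hle : c.support.tail.length ≤ 3 := by
    have := hc.support_nodup.length_le_card
    omega
  have hst : c.support.length = c.length + 1 := c.length_support
  have hlen : c.length = 3 := by
    have : c.support.tail.length = c.support.length - 1 := by
      cases c.support <;> simp
    omega
  cases c with
  | nil => simp at hlen
  | cons h1 p =>
    rename_i y
    cases p with
    | nil => simp at hlen
    | cons h2 q =>
      rename_i z
      cases q with
      | nil => simp at hlen
      | cons h3' r =>
        cases r with
        | cons h4 s => simp [Walk.length_cons] at hlen
        | nil =>
          have hnd := hc.support_nodup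
          simp [Walk.support_cons] at hnd
          obtain ⟨⟨hyz, hyx⟩, hzx⟩ := hnd
          have huniv : ({x, y, z} : Finset α) = Finset.univ :=
            Finset.eq_univ_of_card _ (by
              rw [Finset.card_insert_of_notMem (by simp [h1.ne, Ne.symm hzx]),
                Finset.card_insert_of_notMem (by simp [hyz]),
                Finset.card_singleton, hcard])
          intro p q hpq
          have hp : p ∈ ({x, y, z} : Finset α) := huniv ▸ Finset.mem_univ p
          have hq : q ∈ ({x, y, z} : Finset α) := huniv ▸ Finset.mem_univ q
          simp [Finset.mem_insert] at hp hq
          rcases hp with rfl | rfl | rfl <;> rcases hq with rfl | rfl | rfl <;>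
            first
              | exact absurd rfl hpq
              | exact h1 | exact h1.symm | exact h2 | exact h2.symm
              | exact h3' | exact h3'.symm

private lemma lower_bound (G : SimpleGraph (Fin 5)) (h : LocallyNonforesty G) :
    9 ≤ G.edgeSet.ncard := by
  haveI : DecidableRel G.Adj := Classical.decRel _
  have hdeg := degree_ge_three G h
  rw [← SimpleGraph.coe_edgeFinset, Set.ncard_coe_finset]
  have h2 := G.sum_degrees_eq_twice_card_edges
  suffices h18 : 18 ≤ ∑ u, G.degree u by omega
  by_cases hall : ∀ u, 4 ≤ G.degree u
  · have := Finset.sum_le_sum (s := Finset.univ) fun u _ => hall u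
    simp [Finset.sum_const] at this
    omega
  push_neg at hall
  obtain ⟨v, hv4⟩ := hall
  have hdeg3 : G.degree v = 3 := by have := hdeg v; omega
  obtain ⟨a, b, c, hab, hac, hbc, hN⟩ :=
    Finset.card_eq_three.mp (hdeg3 : (G.neighborFinset v).card = 3)
  have hva : G.Adj v a := by
    rw [← SimpleGraph.mem_neighborFinset, hN]; simp
  have hvb : G.Adj v b := by
    rw [← SimpleGraph.mem_neighborFinset, hN]; simp
  have hvc : G.Adj v c := by
    rw [← SimpleGraph.mem_neighborFinset, hN]; simp
  have hcard3 : Fintype.card ↥(G.neighborSet v) = 3 := by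
    rw [G.card_neighborSet_eq_degree]; exact hdeg3
  have htri := complete_of_cycle_card_three hcard3 (h v)
  have hab' : G.Adj a b := by
    have := htri ⟨a, hva⟩ ⟨b, hvb⟩ (by simp [Subtype.ext_iff, hab])
    simpa using this
  have hac' : G.Adj a c := by
    have := htri ⟨a, hva⟩ ⟨c, hvc⟩ (by simp [Subtype.ext_iff, hac])
    simpa using this
  have hbc' : G.Adj b c := by
    have := htri ⟨b, hvb⟩ ⟨c, hvc⟩ (by simp [Subtype.ext_iff, hbc])
    simpa using this
  -- the fifth vertex
  set T : Finset (Fin 5) := {v, a, b, c} with hT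
  have hTcard : T.card = 4 := by
    rw [hT, Finset.card_insert_of_notMem (by simp [hva.ne, hvb.ne, hvc.ne]),
      Finset.card_insert_of_notMem (by simp [hab, hac]),
      Finset.card_insert_of_notMem (by simp [hbc]), Finset.card_singleton]
  have hTc : Tᶜ.card = 1 := by
    rw [Finset.card_compl, hTcard]; rfl
  obtain ⟨w, hw⟩ := Finset.card_eq_one.mp hTc
  have hwT : w ∉ T := by
    have : w ∈ Tᶜ := by rw [hw]; simp
    simpa using this
  simp [hT, Finset.mem_insert] at hwT
  obtain ⟨hwv, hwa, hwb, hwc⟩ := hwT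
  have hvw : ¬ G.Adj v w := by
    intro hadj
    have : w ∈ G.neighborFinset v := (SimpleGraph.mem_neighborFinset _ _ _).mpr hadj
    rw [hN] at this
    simp at this
    tauto
  have hNw : G.neighborFinset w = {a, b, c} := by
    apply Finset.eq_of_subset_of_card_le
    · intro u hu
      have hadj : G.Adj w u := (SimpleGraph.mem_neighborFinset _ _ _).mp hu
      have huw : u ≠ w := hadj.ne'
      have huv : u ≠ v := by
        rintro rfl
        exact hvw hadj.symm
      have huT : u ∈ T := by
        by_contra h'
        have : u ∈ Tᶜ := Finset.mem_compl.mpr h'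
        rw [hw] at this
        simp at this
        exact huw this
      rw [hT] at huT
      simp [Finset.mem_insert] at huT ⊢
      tauto
    · have := hdeg w
      calc ({a, b, c} : Finset (Fin 5)).card = 3 := by
            rw [Finset.card_insert_of_notMem (by simp [hab, hac]),
              Finset.card_insert_of_notMem (by simp [hbc]), Finset.card_singleton]
        _ ≤ _ := by
            have : G.degree w = (G.neighborFinset w).card := rfl
            omega
  have hwa' : G.Adj w a := by
    rw [← SimpleGraph.mem_neighborFinset, hNw]; simp
  have hwb' : G.Adj w b := by
    rw [← SimpleGraph.mem_neighborFinset, hNw]; simp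
  have hwc' : G.Adj w c := by
    rw [← SimpleGraph.mem_neighborFinset, hNw]; simp
  -- degrees of a, b, c are at least 4
  have ha4 : 4 ≤ G.degree a := by
    have hsub : ({v, b, c, w} : Finset (Fin 5)) ⊆ G.neighborFinset a := by
      intro u hu
      simp [Finset.mem_insert] at hu
      rcases hu with rfl | rfl | rfl | rfl
      · exact (SimpleGraph.mem_neighborFinset _ _ _).mpr hva.symm
      · exact (SimpleGraph.mem_neighborFinset _ _ _).mpr hab'
      · exact (SimpleGraph.mem_neighborFinset _ _ _).mpr hac'
      · exact (SimpleGraph.mem_neighborFinset _ _ _).mpr hwa'.symm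
    have hc4 : ({v, b, c, w} : Finset (Fin 5)).card = 4 := by
      rw [Finset.card_insert_of_notMem (by simp [hvb.ne, hvc.ne, Ne.symm hwv]),
        Finset.card_insert_of_notMem (by simp [hbc, Ne.symm hwb]),
        Finset.card_insert_of_notMem (by simp [Ne.symm hwc]), Finset.card_singleton]
    calc 4 = ({v, b, c, w} : Finset (Fin 5)).card := hc4.symm
      _ ≤ (G.neighborFinset a).card := Finset.card_le_card hsub
  have hb4 : 4 ≤ G.degree b := by
    have hsub : ({v, a, c, w} : Finset (Fin 5)) ⊆ G.neighborFinset b := by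
      intro u hu
      simp [Finset.mem_insert] at hu
      rcases hu with rfl | rfl | rfl | rfl
      · exact (SimpleGraph.mem_neighborFinset _ _ _).mpr hvb.symm
      · exact (SimpleGraph.mem_neighborFinset _ _ _).mpr hab'.symm
      · exact (SimpleGraph.mem_neighborFinset _ _ _).mpr hbc'
      · exact (SimpleGraph.mem_neighborFinset _ _ _).mpr hwb'.symm
    have hc4 : ({v, a, c, w} : Finset (Fin 5)).card = 4 := by
      rw [Finset.card_insert_of_notMem (by simp [hva.ne, hvc.ne, Ne.symm hwv]),
        Finset.card_insert_of_notMem (by simp [hac, Ne.symm hwa]),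
        Finset.card_insert_of_notMem (by simp [Ne.symm hwc]), Finset.card_singleton]
    calc 4 = ({v, a, c, w} : Finset (Fin 5)).card := hc4.symm
      _ ≤ (G.neighborFinset b).card := Finset.card_le_card hsub
  have hc4' : 4 ≤ G.degree c := by
    have hsub : ({v, a, b, w} : Finset (Fin 5)) ⊆ G.neighborFinset c := by
      intro u hu
      simp [Finset.mem_insert] at hu
      rcases hu with rfl | rfl | rfl | rfl
      · exact (SimpleGraph.mem_neighborFinset _ _ _).mpr hvc.symm
      · exact (SimpleGraph.mem_neighborFinset _ _ _).mpr hac'.symm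
      · exact (SimpleGraph.mem_neighborFinset _ _ _).mpr hbc'.symm
      · exact (SimpleGraph.mem_neighborFinset _ _ _).mpr hwc'.symm
    have hc4 : ({v, a, b, w} : Finset (Fin 5)).card = 4 := by
      rw [Finset.card_insert_of_notMem (by simp [hva.ne, hvb.ne, Ne.symm hwv]),
        Finset.card_insert_of_notMem (by simp [hab, Ne.symm hwa]),
        Finset.card_insert_of_notMem (by simp [Ne.symm hwb]), Finset.card_singleton]
    calc 4 = ({v, a, b, w} : Finset (Fin 5)).card := hc4.symm
      _ ≤ (G.neighborFinset c).card := Finset.card_le_card hsub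
  -- sum over all five vertices
  have huniv : ({v, a, b, c, w} : Finset (Fin 5)) = Finset.univ := by
    apply Finset.eq_univ_of_card
    rw [Finset.card_insert_of_notMem
        (by simp [hva.ne, hvb.ne, hvc.ne, Ne.symm hwv]),
      Finset.card_insert_of_notMem (by simp [hab, hac, Ne.symm hwa]),
      Finset.card_insert_of_notMem (by simp [hbc, Ne.symm hwb]),
      Finset.card_insert_of_notMem (by simp [Ne.symm hwc]), Finset.card_singleton]
    rfl
  have hsum : ∑ u, G.degree u =
      G.degree v + (G.degree a + (G.degree b + (G.degree c + G.degree w))) := by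
    rw [← huniv,
      Finset.sum_insert (by simp [hva.ne, hvb.ne, hvc.ne, Ne.symm hwv]),
      Finset.sum_insert (by simp [hab, hac, Ne.symm hwa]),
      Finset.sum_insert (by simp [hbc, Ne.symm hwb]),
      Finset.sum_insert (by simp [Ne.symm hwc]), Finset.sum_singleton]
  have := hdeg v
  have := hdeg w
  omega

theorem stmt6 :
    IsLeast {m : ℕ | ∃ G : SimpleGraph (Fin 5),
      LocallyNonforesty G ∧ G.edgeSet.ncard = m} 9 := by
  constructor
  · exact ⟨G5, G5_locally, G5_card⟩
  · rintro m ⟨G, hG, rfl⟩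
    exact lower_bound G hG
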